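/- Let 0 < γ < 1, T > 0, and let g : ℝ → ℝ be continuous on [0, T] with |g(r)| ≤ G for all r ∈ [0, T]. Let v : ℝ × ℝ → ℝ be such that s ↦ v(x, s) is continuous on [0, T] for each x, |v(x, s)| ≤ M for all x and all s ∈ [0, T], and |v(x, t) − v(y, s)| ≤ H · (|x − y|^γ + |t − s|^{γ/2}) for all x, y ∈ ℝ and s, t ∈ [0, T]. Then for all x, y ∈ ℝ and all s, t ∈ [0, T], |(g *ₜ v)(x, t) − (g *ₛ v)(y, s)| ≤ G · (T · H + T^{1 − γ/2} · M) · (|x − y|^γ + |t − s|^{γ/2}); in particular the parabolic Hölder seminorm of g *ₜ v of exponent γ on ℝ × [0, T] is at most G · (T · H + T^{1 − γ/2} · M). -/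

import Mathlib

open Set intervalIntegral MeasureTheory

/-- Parabolic Hölder seminorm estimate of Lemma A.1: the time convolution
`g *ₜ v` has parabolic Hölder seminorm of exponent `γ` on `ℝ × [0, T]`
at most `G (T H + T^{1−γ/2} M)`. -/
theorem time_convolution_holder_seminorm_bound
    (γ T G M H : ℝ) (hγ0 : 0 < γ) (hγ1 : γ < 1) (hT : 0 < T)
    (g : ℝ → ℝ) (v : ℝ → ℝ → ℝ)
    (hg_cont : ContinuousOn g (Set.Icc 0 T))
    (hg_bd : ∀ r ∈ Set.Icc (0 : ℝ) T, |g r| ≤ G)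
    (hv_cont : ∀ x : ℝ, ContinuousOn (fun s => v x s) (Set.Icc 0 T))
    (hv_bd : ∀ x : ℝ, ∀ s ∈ Set.Icc (0 : ℝ) T, |v x s| ≤ M)
    (hv_hol : ∀ x y : ℝ, ∀ s ∈ Set.Icc (0 : ℝ) T, ∀ t ∈ Set.Icc (0 : ℝ) T,
      |v x t - v y s| ≤ H * (|x - y| ^ γ + |t - s| ^ (γ / 2))) :
    ∀ x y : ℝ, ∀ s ∈ Set.Icc (0 : ℝ) T, ∀ t ∈ Set.Icc (0 : ℝ) T,
      |(∫ r in (0 : ℝ)..t, g (t - r) * v x r) - ∫ r in (0 : ℝ)..s, g (s - r) * v y r| ≤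
        G * (T * H + T ^ (1 - γ / 2) * M) * (|x - y| ^ γ + |t - s| ^ (γ / 2)) := by
  have hG : 0 ≤ G := le_trans (abs_nonneg _) (hg_bd 0 ⟨le_rfl, hT.le⟩)
  have hM : 0 ≤ M := le_trans (abs_nonneg _) (hv_bd 0 0 ⟨le_rfl, hT.le⟩)
  have hH : 0 ≤ H := by
    have h := hv_hol 0 1 0 ⟨le_rfl, hT.le⟩ 0 ⟨le_rfl, hT.le⟩
    simp [Real.zero_rpow (by positivity : γ/2 ≠ 0)] at h
    exact le_trans (abs_nonneg _) h
  -- change of variables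
  have hchv : ∀ z : ℝ, ∀ u ∈ Set.Icc (0:ℝ) T,
      (∫ r in (0:ℝ)..u, g (u - r) * v z r) = ∫ r in (0:ℝ)..u, g r * v z (u - r) := by
    intro z u hu
    have h := intervalIntegral.integral_comp_sub_left (a := (0:ℝ)) (b := u)
      (fun r => g r * v z (u - r)) u
    simp only [sub_sub_cancel, sub_zero, sub_self] at h
    exact h
  -- continuity / integrability
  have hcont : ∀ z : ℝ, ∀ u ∈ Set.Icc (0:ℝ) T,
      ContinuousOn (fun r => g r * v z (u - r)) (Set.Icc 0 u) := by
    intro z u hu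
    apply ContinuousOn.mul
    · exact hg_cont.mono (Set.Icc_subset_Icc le_rfl hu.2)
    · apply (hv_cont z).comp (continuousOn_const.sub continuousOn_id)
      intro r hr
      obtain ⟨hr1, hr2⟩ := hr
      simp only [id_eq, Set.mem_Icc, Pi.sub_apply]
      exact ⟨by linarith, by linarith [hu.2]⟩
  -- key case s ≤ t
  suffices key : ∀ x y : ℝ, ∀ s ∈ Set.Icc (0 : ℝ) T, ∀ t ∈ Set.Icc (0 : ℝ) T, s ≤ t →
      |(∫ r in (0 : ℝ)..t, g (t - r) * v x r) - ∫ r in (0 : ℝ)..s, g (s - r) * v y r| ≤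
        G * (T * H + T ^ (1 - γ / 2) * M) * (|x - y| ^ γ + |t - s| ^ (γ / 2)) by
    intro x y s hs t ht
    rcases le_total s t with hst | hst
    · exact key x y s hs t ht hst
    · have h := key y x t ht s hs hst
      rw [abs_sub_comm] at h
      rw [abs_sub_comm x y, abs_sub_comm t s]
      exact h
  intro x y s hs t ht hst
  have hstT : t - s ≤ T := by linarith [hs.1, ht.2]
  set E := |x - y| ^ γ + |t - s| ^ (γ / 2) with hE
  have hE1 : (0:ℝ) ≤ |x - y| ^ γ := Real.rpow_nonneg (abs_nonneg _) _
  have hE2 : (0:ℝ) ≤ |t - s| ^ (γ / 2) := Real.rpow_nonneg (abs_nonneg _) _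
  have habs_ts : |t - s| = t - s := abs_of_nonneg (by linarith)
  -- integrability pieces
  have hIx : IntervalIntegrable (fun r => g r * v x (t - r)) volume 0 s :=
    (((hcont x t ht).mono (Set.Icc_subset_Icc le_rfl hst)).intervalIntegrable_of_Icc hs.1)
  have hIx2 : IntervalIntegrable (fun r => g r * v x (t - r)) volume s t :=
    (((hcont x t ht).mono (Set.Icc_subset_Icc hs.1 le_rfl)).intervalIntegrable_of_Icc hst)
  have hIy : IntervalIntegrable (fun r => g r * v y (s - r)) volume 0 s :=
    ((hcont y s hs).intervalIntegrable_of_Icc hs.1)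
  have hsplit : (∫ r in (0:ℝ)..t, g r * v x (t - r)) =
      (∫ r in (0:ℝ)..s, g r * v x (t - r)) + ∫ r in s..t, g r * v x (t - r) :=
    (intervalIntegral.integral_add_adjacent_intervals hIx hIx2).symm
  rw [hchv x t ht, hchv y s hs, hsplit]
  have hrw : (∫ r in (0:ℝ)..s, g r * v x (t - r)) + (∫ r in s..t, g r * v x (t - r))
      - ∫ r in (0:ℝ)..s, g r * v y (s - r)
      = (∫ r in (0:ℝ)..s, (g r * v x (t - r) - g r * v y (s - r)))
        + ∫ r in s..t, g r * v x (t - r) := by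
    rw [intervalIntegral.integral_sub hIx hIy]; ring
  rw [hrw]
  -- bound first piece
  have hb1 : |∫ r in (0:ℝ)..s, (g r * v x (t - r) - g r * v y (s - r))|
      ≤ (G * (H * E)) * |s - 0| := by
    rw [← Real.norm_eq_abs]
    apply intervalIntegral.norm_integral_le_of_norm_le_const
    intro r hr
    rw [Set.uIoc_of_le hs.1] at hr
    have hr0 : 0 ≤ r := hr.1.le
    have hrs : r ≤ s := hr.2
    have hmem1 : t - r ∈ Set.Icc (0:ℝ) T := ⟨by linarith, by linarith [ht.2]⟩
    have hmem2 : s - r ∈ Set.Icc (0:ℝ) T := ⟨by linarith, by linarith [hs.2]⟩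
    have hgr : |g r| ≤ G := hg_bd r ⟨hr0, by linarith [hs.2]⟩
    have hvv := hv_hol x y (s - r) hmem2 (t - r) hmem1
    have hsub : t - r - (s - r) = t - s := by ring
    rw [hsub] at hvv
    calc ‖g r * v x (t - r) - g r * v y (s - r)‖
        = |g r| * |v x (t - r) - v y (s - r)| := by
          rw [← mul_sub, Real.norm_eq_abs, abs_mul]
      _ ≤ G * (H * E) := mul_le_mul hgr hvv (abs_nonneg _) hG
  -- bound second piece
  have hb2 : |∫ r in s..t, g r * v x (t - r)| ≤ (G * M) * |t - s| := by
    rw [← Real.norm_eq_abs]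
    apply intervalIntegral.norm_integral_le_of_norm_le_const
    intro r hr
    rw [Set.uIoc_of_le hst] at hr
    have hr0 : 0 ≤ r := le_trans hs.1 hr.1.le
    have hrt : r ≤ t := hr.2
    have hmem1 : t - r ∈ Set.Icc (0:ℝ) T := ⟨by linarith, by linarith [ht.2]⟩
    have hgr : |g r| ≤ G := hg_bd r ⟨hr0, by linarith [ht.2]⟩
    calc ‖g r * v x (t - r)‖ = |g r| * |v x (t - r)| := abs_mul _ _
      _ ≤ G * M := mul_le_mul hgr (hv_bd x _ hmem1) (abs_nonneg _) hG
  -- t - s ≤ T^{1-γ/2} (t-s)^{γ/2}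
  have hts_pow : t - s ≤ T ^ (1 - γ / 2) * (t - s) ^ (γ / 2) := by
    rcases eq_or_lt_of_le hst with h | h
    · simp [← h, Real.zero_rpow (by positivity : γ / 2 ≠ 0)]
    · have hpos : 0 < t - s := by linarith
      have h1 : t - s = (t - s) ^ (1 - γ / 2) * (t - s) ^ (γ / 2) := by
        rw [← Real.rpow_add hpos]
        norm_num
      calc t - s = (t - s) ^ (1 - γ / 2) * (t - s) ^ (γ / 2) := h1
        _ ≤ T ^ (1 - γ / 2) * (t - s) ^ (γ / 2) :=
          mul_le_mul_of_nonneg_right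
            (Real.rpow_le_rpow hpos.le hstT (by linarith))
            (Real.rpow_nonneg hpos.le _)
  calc |(∫ r in (0:ℝ)..s, (g r * v x (t - r) - g r * v y (s - r)))
        + ∫ r in s..t, g r * v x (t - r)|
      ≤ |∫ r in (0:ℝ)..s, (g r * v x (t - r) - g r * v y (s - r))|
        + |∫ r in s..t, g r * v x (t - r)| := abs_add_le _ _
    _ ≤ (G * (H * E)) * |s - 0| + (G * M) * |t - s| := add_le_add hb1 hb2
    _ ≤ (G * (H * E)) * T + (G * M) * (T ^ (1 - γ / 2) * (t - s) ^ (γ / 2)) := by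
        apply add_le_add
        · apply mul_le_mul_of_nonneg_left _ (by positivity)
          rw [sub_zero, abs_of_nonneg hs.1]; exact hs.2
        · rw [habs_ts]
          exact mul_le_mul_of_nonneg_left hts_pow (by positivity)
    _ ≤ G * (T * H + T ^ (1 - γ / 2) * M) * E := by
        have hTpow : (0:ℝ) ≤ T ^ (1 - γ / 2) := Real.rpow_nonneg hT.le _
        have hEeq : E = |x - y| ^ γ + (t - s) ^ (γ / 2) := by rw [hE, habs_ts]
        have hnn : 0 ≤ G * M * T ^ (1 - γ / 2) * |x - y| ^ γ :=
          mul_nonneg (mul_nonneg (mul_nonneg hG hM) hTpow) hE1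
        rw [hEeq]
        nlinarith [hnn]
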